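/- Let L > 0, let σ be a real number, and let Φ : ℝ → ℝ be twice continuously differentiable with Φ''(x) = −σΦ(x) for all x ∈ [0, L] and Φ'(0) = Φ'(L) = 0. Then ∫₀^L (Φ'(x))²·(d²/dx²)(Φ(x)²) dx = 2σ²·∫₀^L Φ(x)⁴ dx − 2σ·∫₀^L Φ(x)²(Φ'(x))² dx. -/

import Mathlib

open intervalIntegral MeasureTheory

/-- Identity (5.26): for a Neumann eigenfunction Φ on [0,L] with eigenvalue σ,
∫₀^L (Φ')² (Φ²)'' dx = 2σ² ∫₀^L Φ⁴ dx − 2σ ∫₀^L Φ² (Φ')² dx. -/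
theorem integral_gradsq_laplacian_phisq (L σ : ℝ) (hL : 0 < L) (Φ : ℝ → ℝ)
    (hΦ : ContDiff ℝ 2 Φ)
    (heig : ∀ x ∈ Set.Icc (0 : ℝ) L, deriv (deriv Φ) x = -σ * Φ x)
    (hbc0 : deriv Φ 0 = 0) (hbcL : deriv Φ L = 0) :
    ∫ x in (0 : ℝ)..L, (deriv Φ x) ^ 2 * deriv (deriv (fun y => (Φ y) ^ 2)) x =
      2 * σ ^ 2 * (∫ x in (0 : ℝ)..L, (Φ x) ^ 4) -
        2 * σ * ∫ x in (0 : ℝ)..L, (Φ x) ^ 2 * (deriv Φ x) ^ 2 := by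
  have hΦd : Differentiable ℝ Φ := hΦ.differentiable (by norm_num)
  have hd1 : ContDiff ℝ 1 (deriv Φ) :=
    (contDiff_succ_iff_deriv.mp (show ContDiff ℝ (1 + 1) Φ by norm_num; exact hΦ)).2.2
  have hΦ'd : Differentiable ℝ (deriv Φ) := hd1.differentiable (by norm_num)
  have hcΦ : Continuous Φ := hΦ.continuous
  have hcΦ' : Continuous (deriv Φ) := hd1.continuous
  have hcΦ'' : Continuous (deriv (deriv Φ)) :=
    ((contDiff_succ_iff_deriv.mp (show ContDiff ℝ (0 + 1) (deriv Φ) by norm_num; exact hd1)).2.2).continuous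
  have hdΦ : ∀ x : ℝ, HasDerivAt Φ (deriv Φ x) x := fun x => (hΦd x).hasDerivAt
  have hdΦ' : ∀ x : ℝ, HasDerivAt (deriv Φ) (deriv (deriv Φ) x) x :=
    fun x => (hΦ'd x).hasDerivAt
  set A : ℝ := Φ 0 ^ 2 with hA
  -- energy conservation
  have energy : ∀ x ∈ Set.Icc (0 : ℝ) L, (deriv Φ x) ^ 2 + σ * Φ x ^ 2 = σ * A := by
    have hconst :=
      constant_of_has_deriv_right_zero
        (f := fun y => (deriv Φ y) ^ 2 + σ * Φ y ^ 2) (a := 0) (b := L)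
        (by
          apply Continuous.continuousOn
          continuity)
        (by
          intro x hx
          have hx' : x ∈ Set.Icc (0 : ℝ) L := Set.Ico_subset_Icc_self hx
          have h : HasDerivAt (fun y => (deriv Φ y) ^ 2 + σ * Φ y ^ 2)
              ((2 : ℕ) * deriv Φ x ^ 1 * deriv (deriv Φ) x +
                σ * ((2 : ℕ) * Φ x ^ 1 * deriv Φ x)) x :=
            ((hdΦ' x).pow 2).add (((hdΦ x).pow 2).const_mul σ)
          have h0 : ((2 : ℕ) * deriv Φ x ^ 1 * deriv (deriv Φ) x +
              σ * ((2 : ℕ) * Φ x ^ 1 * deriv Φ x)) = 0 := by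
            rw [heig x hx']; push_cast; ring
          rw [h0] at h
          exact h.hasDerivWithinAt)
    intro x hx
    have h := hconst x hx
    simp only [hbc0] at h
    rw [hA]
    norm_num at h
    linarith
  have P1 : ∀ x ∈ Set.Icc (0 : ℝ) L, (deriv Φ x) ^ 2 = σ * A - σ * Φ x ^ 2 := by
    intro x hx
    have := energy x hx
    linarith
  -- second derivative of Φ²
  have hsq : (deriv fun y => Φ y ^ 2) = fun y => 2 * Φ y * deriv Φ y := by
    funext y
    have := ((hdΦ y).pow 2).deriv
    rw [show (fun y => Φ y ^ 2) = Φ ^ 2 from rfl]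
    simpa using this
  have hd2sq : ∀ x : ℝ, deriv (deriv fun y => Φ y ^ 2) x =
      2 * (deriv Φ x) ^ 2 + 2 * Φ x * deriv (deriv Φ) x := by
    intro x
    rw [hsq]
    have h1x : HasDerivAt (fun y => Φ y * deriv Φ y)
        (deriv Φ x * deriv Φ x + Φ x * deriv (deriv Φ) x) x := (hdΦ x).mul (hdΦ' x)
    have h : HasDerivAt (fun y => 2 * Φ y * deriv Φ y)
        (2 * (deriv Φ x * deriv Φ x + Φ x * deriv (deriv Φ) x)) x := by
      simpa [mul_assoc] using h1x.const_mul 2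
    rw [h.deriv]
    ring
  -- abbreviations
  set I2 : ℝ := ∫ x in (0 : ℝ)..L, Φ x ^ 2 with hI2
  set I4 : ℝ := ∫ x in (0 : ℝ)..L, Φ x ^ 4 with hI4
  have hint2 : IntervalIntegrable (fun x => Φ x ^ 2) volume 0 L :=
    (by continuity : Continuous fun x => Φ x ^ 2).intervalIntegrable _ _
  have hint4 : IntervalIntegrable (fun x => Φ x ^ 4) volume 0 L :=
    (by continuity : Continuous fun x => Φ x ^ 4).intervalIntegrable _ _
  have huIcc : Set.uIcc (0 : ℝ) L = Set.Icc 0 L := Set.uIcc_of_le hL.le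
  -- integration by parts: ∫ (Φ')² = σ ∫ Φ²
  have hparts : (∫ x in (0 : ℝ)..L, (deriv Φ x * deriv Φ x + Φ x * deriv (deriv Φ) x)) =
      Φ L * deriv Φ L - Φ 0 * deriv Φ 0 :=
    intervalIntegral.integral_deriv_mul_eq_sub (fun x _ => hdΦ x) (fun x _ => hdΦ' x)
      (hcΦ'.intervalIntegrable _ _) (hcΦ''.intervalIntegrable _ _)
  have h1 : (∫ x in (0 : ℝ)..L, (deriv Φ x) ^ 2) = σ * I2 := by
    have hcongr : (∫ x in (0 : ℝ)..L, (deriv Φ x * deriv Φ x + Φ x * deriv (deriv Φ) x)) =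
        ∫ x in (0 : ℝ)..L, ((deriv Φ x) ^ 2 - σ * Φ x ^ 2) := by
      apply intervalIntegral.integral_congr
      intro x hx
      beta_reduce
      rw [huIcc] at hx
      rw [heig x hx]
      ring
    rw [hcongr, intervalIntegral.integral_sub (show IntervalIntegrable (fun x => deriv Φ x ^ 2) volume 0 L from (hcΦ'.pow 2).intervalIntegrable _ _)
      (hint2.const_mul σ), intervalIntegral.integral_const_mul, hbc0, hbcL, ← hI2] at hparts
    linarith
  have h2 : (∫ x in (0 : ℝ)..L, (deriv Φ x) ^ 2) = σ * A * L - σ * I2 := by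
    have hcongr : (∫ x in (0 : ℝ)..L, (deriv Φ x) ^ 2) =
        ∫ x in (0 : ℝ)..L, (σ * A - σ * Φ x ^ 2) := by
      apply intervalIntegral.integral_congr
      intro x hx
      beta_reduce
      rw [huIcc] at hx
      exact P1 x hx
    rw [hcongr, intervalIntegral.integral_sub (intervalIntegrable_const)
      (hint2.const_mul σ), intervalIntegral.integral_const,
      intervalIntegral.integral_const_mul, ← hI2]
    simp only [smul_eq_mul]
    ring
  -- LHS
  have hLHS : (∫ x in (0 : ℝ)..L, (deriv Φ x) ^ 2 * deriv (deriv (fun y => (Φ y) ^ 2)) x) =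
      2 * σ ^ 2 * A ^ 2 * L - 6 * σ ^ 2 * A * I2 + 4 * σ ^ 2 * I4 := by
    have hcongr : (∫ x in (0 : ℝ)..L, (deriv Φ x) ^ 2 * deriv (deriv (fun y => (Φ y) ^ 2)) x) =
        ∫ x in (0 : ℝ)..L, (2 * σ ^ 2 * A ^ 2 - 6 * σ ^ 2 * A * Φ x ^ 2 + 4 * σ ^ 2 * Φ x ^ 4) := by
      apply intervalIntegral.integral_congr
      intro x hx
      beta_reduce
      rw [huIcc] at hx
      rw [hd2sq x, heig x hx, P1 x hx]
      ring
    rw [hcongr,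
      intervalIntegral.integral_add
        (intervalIntegrable_const.sub (hint2.const_mul (6 * σ ^ 2 * A)))
        (hint4.const_mul (4 * σ ^ 2)),
      intervalIntegral.integral_sub intervalIntegrable_const (hint2.const_mul (6 * σ ^ 2 * A)),
      intervalIntegral.integral_const, intervalIntegral.integral_const_mul,
      intervalIntegral.integral_const_mul, ← hI2, ← hI4]
    simp only [smul_eq_mul]
    ring
  -- RHS mixed term
  have hRHS : (∫ x in (0 : ℝ)..L, (Φ x) ^ 2 * (deriv Φ x) ^ 2) = σ * A * I2 - σ * I4 := by
    have hcongr : (∫ x in (0 : ℝ)..L, (Φ x) ^ 2 * (deriv Φ x) ^ 2) =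
        ∫ x in (0 : ℝ)..L, (σ * A * Φ x ^ 2 - σ * Φ x ^ 4) := by
      apply intervalIntegral.integral_congr
      intro x hx
      beta_reduce
      rw [huIcc] at hx
      rw [P1 x hx]
      ring
    rw [hcongr, intervalIntegral.integral_sub (hint2.const_mul (σ * A)) (hint4.const_mul σ),
      intervalIntegral.integral_const_mul, intervalIntegral.integral_const_mul, ← hI2, ← hI4]
  rw [hLHS, hRHS]
  linear_combination 2 * σ * A * h1 - 2 * σ * A * h2
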